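/- Let a, b ∈ ℝ^d with a ≠ b, let c be drawn according to a d-dimensional Gaussian distribution with covariance σ²·I, and let I ⊆ ℝ be an interval of length ε. Define Δ_{a,b}(c) = ‖c−a‖₂² − ‖c−b‖₂². Then P(Δ_{a,b}(c) ∈ I) ≤ ε / (4σ‖a−b‖₂). -/

import Mathlib

open MeasureTheory ProbabilityTheory

open Real
open scoped NNReal ENNReal

lemma pdf_conv_pointwise (μ₁ μ₂ : ℝ) (v₁ v₂ : ℝ≥0) (hv₁ : v₁ ≠ 0) (hv₂ : v₂ ≠ 0) (z x : ℝ) :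
    gaussianPDFReal μ₁ v₁ x * gaussianPDFReal μ₂ v₂ (z - x)
      = gaussianPDFReal (μ₁ + μ₂) (v₁ + v₂) z *
        gaussianPDFReal (μ₁ + v₁ * (z - μ₁ - μ₂) / (v₁ + v₂)) (v₁ * v₂ / (v₁ + v₂)) x := by
  have h1 : (0:ℝ) < v₁ := lt_of_le_of_ne (v₁.coe_nonneg) (by exact_mod_cast (Ne.symm hv₁))
  have h2 : (0:ℝ) < v₂ := lt_of_le_of_ne (v₂.coe_nonneg) (by exact_mod_cast (Ne.symm hv₂))
  have h12 : (0:ℝ) < (v₁:ℝ) + v₂ := by linarith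
  have hπ : (0:ℝ) < π := pi_pos
  simp only [gaussianPDFReal, NNReal.coe_add, NNReal.coe_mul, NNReal.coe_div]
  rw [mul_mul_mul_comm, mul_mul_mul_comm ((√(2 * π * ((v₁:ℝ) + v₂)))⁻¹), ← Real.exp_add,
    ← Real.exp_add]
  congr 1
  · rw [← mul_inv, ← mul_inv, ← Real.sqrt_mul (by positivity), ← Real.sqrt_mul (by positivity)]
    congr 1
    field_simp
  · congr 1
    field_simp
    ring

lemma pdf_conv_integral (μ₁ μ₂ : ℝ) (v₁ v₂ : ℝ≥0) (hv₁ : v₁ ≠ 0) (hv₂ : v₂ ≠ 0) (z : ℝ) :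
    ∫ x, gaussianPDFReal μ₁ v₁ x * gaussianPDFReal μ₂ v₂ (z - x)
      = gaussianPDFReal (μ₁ + μ₂) (v₁ + v₂) z := by
  have hv₃ : v₁ * v₂ / (v₁ + v₂) ≠ 0 := by
    have : v₁ + v₂ ≠ 0 := by simp [hv₁]
    simp [div_eq_zero_iff, hv₁, hv₂, this]
  simp_rw [pdf_conv_pointwise μ₁ μ₂ v₁ v₂ hv₁ hv₂ z]
  rw [integral_const_mul, integral_gaussianPDFReal_eq_one _ hv₃, mul_one]

lemma pdf_conv_lintegral (μ₁ μ₂ : ℝ) (v₁ v₂ : ℝ≥0) (hv₁ : v₁ ≠ 0) (hv₂ : v₂ ≠ 0) (z : ℝ) :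
    ∫⁻ x, gaussianPDF μ₁ v₁ x * gaussianPDF μ₂ v₂ (z - x)
      = gaussianPDF (μ₁ + μ₂) (v₁ + v₂) z := by
  have hint : Integrable (fun x => gaussianPDFReal μ₁ v₁ x * gaussianPDFReal μ₂ v₂ (z - x)) := by
    simp_rw [pdf_conv_pointwise μ₁ μ₂ v₁ v₂ hv₁ hv₂ z]
    exact (integrable_gaussianPDFReal _ _).const_mul _
  simp_rw [gaussianPDF, ← ENNReal.ofReal_mul (gaussianPDFReal_nonneg _ _ _)]
  rw [← ofReal_integral_eq_lintegral_ofReal hint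
    (ae_of_all _ fun x => mul_nonneg (gaussianPDFReal_nonneg _ _ _) (gaussianPDFReal_nonneg _ _ _)),
    pdf_conv_integral μ₁ μ₂ v₁ v₂ hv₁ hv₂ z]

set_option maxHeartbeats 1000000 in
lemma gaussianReal_conv (μ₁ μ₂ : ℝ) (v₁ v₂ : ℝ≥0) :
    Measure.map (fun p : ℝ × ℝ => p.1 + p.2)
        ((gaussianReal μ₁ v₁).prod (gaussianReal μ₂ v₂))
      = gaussianReal (μ₁ + μ₂) (v₁ + v₂) := by
  by_cases hv₁ : v₁ = 0
  · subst hv₁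
    rw [gaussianReal_zero_var, Measure.dirac_prod,
      Measure.map_map measurable_add measurable_prodMk_left, zero_add,
      show ((fun p : ℝ × ℝ => p.1 + p.2) ∘ Prod.mk μ₁) = (fun x => μ₁ + x) from rfl,
      gaussianReal_map_const_add, add_comm μ₂ μ₁]
  by_cases hv₂ : v₂ = 0
  · subst hv₂
    rw [gaussianReal_zero_var, Measure.prod_dirac,
      Measure.map_map measurable_add measurable_prodMk_right, add_zero,
      show ((fun p : ℝ × ℝ => p.1 + p.2) ∘ (fun x => (x, μ₂))) = (fun x => x + μ₂) from rfl,
      gaussianReal_map_add_const]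
  have hv₁₂ : v₁ + v₂ ≠ 0 := by simp [hv₁]
  ext s hs
  rw [Measure.map_apply measurable_add hs, Measure.prod_apply (measurable_add hs)]
  have h1 : ∀ x : ℝ, gaussianReal μ₂ v₂ (Prod.mk x ⁻¹' ((fun p : ℝ × ℝ => p.1 + p.2) ⁻¹' s))
      = ∫⁻ z in s, gaussianPDF μ₂ v₂ (z - x) := by
    intro x
    have : Prod.mk x ⁻¹' ((fun p : ℝ × ℝ => p.1 + p.2) ⁻¹' s) = (fun y => x + y) ⁻¹' s := rfl
    rw [this, ← Measure.map_apply (measurable_const_add x) hs, gaussianReal_map_const_add,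
      gaussianReal_apply _ hv₂ s]
    refine setLIntegral_congr_fun hs (fun z _ => ?_)
    rw [gaussianPDF, gaussianPDF, gaussianPDFReal_sub]
  rw [lintegral_congr h1]
  have hmeas : Measurable fun x : ℝ => ∫⁻ z in s, gaussianPDF μ₂ v₂ (z - x) :=
    Measurable.lintegral_prod_right' (f := fun p : ℝ × ℝ => gaussianPDF μ₂ v₂ (p.2 - p.1))
      ((measurable_gaussianPDF _ _).comp (measurable_snd.sub measurable_fst))
  rw [gaussianReal_of_var_ne_zero _ hv₁,
    lintegral_withDensity_eq_lintegral_mul _ (measurable_gaussianPDF _ _) hmeas]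
  simp only [Pi.mul_apply]
  have h2 : ∀ x : ℝ, gaussianPDF μ₁ v₁ x * ∫⁻ z in s, gaussianPDF μ₂ v₂ (z - x)
      = ∫⁻ z in s, gaussianPDF μ₁ v₁ x * gaussianPDF μ₂ v₂ (z - x) := fun x =>
    (lintegral_const_mul _ ((measurable_gaussianPDF _ _).comp (measurable_sub_const x))).symm
  simp_rw [h2]
  rw [lintegral_lintegral_swap]
  · rw [gaussianReal_apply _ hv₁₂ s]
    refine setLIntegral_congr_fun hs (fun z _ => ?_)
    exact pdf_conv_lintegral μ₁ μ₂ v₁ v₂ hv₁ hv₂ z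
  · exact (((measurable_gaussianPDF _ _).comp measurable_fst).mul
      ((measurable_gaussianPDF _ _).comp (measurable_snd.sub measurable_fst))).aemeasurable

lemma measurable_wsum {n : ℕ} (w : Fin n → ℝ) :
    Measurable (fun x : Fin n → ℝ => ∑ i, w i * x i) :=
  Finset.measurable_sum _ fun i _ => by fun_prop

lemma pi_gauss_map (v : ℝ≥0) : ∀ (n : ℕ) (m w : Fin n → ℝ),
    (Measure.pi fun i => gaussianReal (m i) v).map (fun x => ∑ i, w i * x i)
      = gaussianReal (∑ i, w i * m i) ((∑ i, (w i) ^ 2).toNNReal * v) := by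
  intro n
  induction n with
  | zero =>
    intro m w
    simp only [Finset.univ_eq_empty, Finset.sum_empty, Real.toNNReal_zero, zero_mul,
      gaussianReal_zero_var]
    have : (fun _ : Fin 0 → ℝ => (0 : ℝ)) = fun _ => (0:ℝ) := rfl
    rw [show (fun x : Fin 0 → ℝ => (0:ℝ)) = (fun _ => 0) from rfl]
    have : IsProbabilityMeasure (Measure.pi fun i : Fin 0 => gaussianReal (m i) v) :=
      inferInstance
    rw [Measure.map_const, measure_univ, one_smul]
  | succ n ih =>
    intro m w
    have hmp := measurePreserving_piFinSuccAbove (fun i : Fin (n+1) => gaussianReal (m i) v) 0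
    set e := MeasurableEquiv.piFinSuccAbove (fun _ : Fin (n+1) => ℝ) 0 with he
    have hcomp : (fun x : Fin (n+1) → ℝ => ∑ i, w i * x i)
        = (fun p : ℝ × (Fin n → ℝ) => w 0 * p.1 + ∑ j, w (Fin.succ j) * p.2 j) ∘ e := by
      ext x
      simp [Fin.sum_univ_succ, e, MeasurableEquiv.piFinSuccAbove, Fin.succAbove, Fin.tail]
    rw [hcomp, ← Measure.map_map (by fun_prop) e.measurable, hmp.map_eq]
    have hg : (fun p : ℝ × (Fin n → ℝ) => w 0 * p.1 + ∑ j, w (Fin.succ j) * p.2 j)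
        = (fun q : ℝ × ℝ => q.1 + q.2) ∘
          Prod.map (fun x : ℝ => w 0 * x) (fun y : Fin n → ℝ => ∑ j, w (Fin.succ j) * y j) :=
      rfl
    rw [hg, ← Measure.map_map measurable_add ((by fun_prop : Measurable fun x : ℝ => w 0 * x).prodMap
      (measurable_wsum _)), ← Measure.map_prod_map _ _ (by fun_prop : Measurable fun x : ℝ => w 0 * x)
      (measurable_wsum _), gaussianReal_map_const_mul]
    simp only [Fin.zero_succAbove]
    rw [ih (fun j => m (Fin.succ j)) (fun j => w (Fin.succ j)), gaussianReal_conv,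
      Fin.sum_univ_succ (fun i => w i * m i)]
    congr 1
    rw [Fin.sum_univ_succ (fun i => w i ^ 2), Real.toNNReal_add (sq_nonneg _)
      (Finset.sum_nonneg fun _ _ => sq_nonneg _), add_mul]
    congr 1
    ext : 1
    simp [Real.coe_toNNReal _ (sq_nonneg (w 0))]

lemma gaussianReal_Icc_le (M : ℝ) (V : ℝ≥0) (hV : V ≠ 0) (l ε : ℝ) (hε : 0 ≤ ε) :
    gaussianReal M V (Set.Icc l (l + ε)) ≤ ENNReal.ofReal (ε / Real.sqrt (2 * π * V)) := by
  rw [gaussianReal_apply_eq_integral _ hV]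
  apply ENNReal.ofReal_le_ofReal
  have hb : ∀ x ∈ Set.Icc l (l + ε), gaussianPDFReal M V x ≤ (√(2 * π * V))⁻¹ := by
    intro x _
    rw [gaussianPDFReal]
    have hVpos : (0:ℝ) < V := lt_of_le_of_ne V.coe_nonneg (by exact_mod_cast (Ne.symm hV))
    refine mul_le_of_le_one_right (by positivity) ?_
    rw [Real.exp_le_one_iff]
    have : (0:ℝ) ≤ (x - M)^2 := sq_nonneg _
    have h2V : (0:ℝ) < 2 * V := by positivity
    exact div_nonpos_of_nonpos_of_nonneg (by linarith) (le_of_lt h2V)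
  calc ∫ x in Set.Icc l (l + ε), gaussianPDFReal M V x
      ≤ ∫ _ in Set.Icc l (l + ε), (√(2 * π * V))⁻¹ :=
        setIntegral_mono_on (integrable_gaussianPDFReal M V).integrableOn
          (integrableOn_const (by rw [Real.volume_Icc]; exact ENNReal.ofReal_ne_top))
          measurableSet_Icc hb
    _ = ε / √(2 * π * V) := by
        rw [setIntegral_const, Real.volume_real_Icc, smul_eq_mul, add_sub_cancel_left,
          max_eq_left hε, div_eq_mul_inv]

/-- The `d`-dimensional spherical Gaussian measure with mean `m` and standard deviation `σ`
(covariance `σ² · I`), as a measure on Euclidean space. -/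
noncomputable def gaussPi (d : ℕ) (m : EuclideanSpace ℝ (Fin d)) (σ : ℝ) :
    Measure (EuclideanSpace ℝ (Fin d)) :=
  Measure.map (MeasurableEquiv.toLp 2 (Fin d → ℝ))
    (Measure.pi fun i => gaussianReal (m i) ((σ ^ 2).toNNReal))

/-- For `a ≠ b` and `c` drawn from a `d`-dimensional spherical Gaussian with standard deviation
`σ` (arbitrary mean `m`), and any interval `I` of length `ε`, the probability that
`Δ_{a,b}(c) = ‖c-a‖² - ‖c-b‖²` lies in `I` is at most `ε/(4σ‖a-b‖)`. -/
theorem stmt8 (d : ℕ) (hd : 1 ≤ d) (σ ε : ℝ) (hσ : 0 < σ) (hε : 0 ≤ ε)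
    (m a b : EuclideanSpace ℝ (Fin d)) (hab : a ≠ b) (l : ℝ) :
    gaussPi d m σ {c | ‖c - a‖ ^ 2 - ‖c - b‖ ^ 2 ∈ Set.Icc l (l + ε)}
      ≤ ENNReal.ofReal (ε / (4 * σ * ‖a - b‖)) := by
  classical
  set w : Fin d → ℝ := fun i => 2 * (b i - a i) with hw
  set K : ℝ := ∑ i, (a i ^ 2 - b i ^ 2) with hK
  have hcont : Continuous fun c : EuclideanSpace ℝ (Fin d) => ‖c - a‖ ^ 2 - ‖c - b‖ ^ 2 :=
    ((continuous_id.sub continuous_const).norm.pow 2).sub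
      ((continuous_id.sub continuous_const).norm.pow 2)
  have hS : MeasurableSet
      {c : EuclideanSpace ℝ (Fin d) | ‖c - a‖ ^ 2 - ‖c - b‖ ^ 2 ∈ Set.Icc l (l + ε)} :=
    hcont.measurable measurableSet_Icc
  rw [gaussPi, Measure.map_apply (MeasurableEquiv.measurable _) hS]
  have hnorm : ∀ (c y : EuclideanSpace ℝ (Fin d)), ‖c - y‖ ^ 2 = ∑ i, (c i - y i) ^ 2 := by
    intro c y
    rw [EuclideanSpace.norm_eq, Real.sq_sqrt (Finset.sum_nonneg fun i _ => sq_nonneg _)]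
    refine Finset.sum_congr rfl fun i _ => ?_
    rw [Real.norm_eq_abs, sq_abs]
    rfl
  have hpre : (MeasurableEquiv.toLp 2 (Fin d → ℝ)) ⁻¹'
        {c | ‖c - a‖ ^ 2 - ‖c - b‖ ^ 2 ∈ Set.Icc l (l + ε)}
      = (fun x : Fin d → ℝ => ∑ i, w i * x i) ⁻¹' Set.Icc (l - K) (l - K + ε) := by
    ext x
    simp only [Set.mem_preimage, Set.mem_setOf_eq, Set.mem_Icc]
    rw [hnorm, hnorm]
    have hsum : (∑ i, (((MeasurableEquiv.toLp 2 (Fin d → ℝ)) x) i - a i) ^ 2)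
        - (∑ i, (((MeasurableEquiv.toLp 2 (Fin d → ℝ)) x) i - b i) ^ 2)
        = (∑ i, w i * x i) + K := by
      have hcoord : ∀ i, ((MeasurableEquiv.toLp 2 (Fin d → ℝ)) x) i = x i :=
        fun i => rfl
      simp_rw [hcoord]
      rw [← Finset.sum_sub_distrib, hK, ← Finset.sum_add_distrib]
      refine Finset.sum_congr rfl fun i _ => ?_
      simp only [hw]; ring
    rw [hsum]
    constructor <;> intro h <;> exact ⟨by linarith [h.1], by linarith [h.2]⟩
  rw [hpre, ← Measure.map_apply (measurable_wsum w) measurableSet_Icc,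
    pi_gauss_map ((σ ^ 2).toNNReal) d (fun i => m i) w]
  have hab' : (0:ℝ) < ‖a - b‖ := by rwa [norm_sub_pos_iff]
  have hwsum : ∑ i, w i ^ 2 = 4 * σ ^ 0 * ‖a - b‖ ^ 2 := by
    rw [pow_zero, mul_one, hnorm a b, Finset.mul_sum]
    refine Finset.sum_congr rfl fun i _ => ?_
    simp only [hw]; ring
  have hVcoe : (((∑ i, w i ^ 2).toNNReal * (σ ^ 2).toNNReal : ℝ≥0) : ℝ)
      = 4 * ‖a - b‖ ^ 2 * σ ^ 2 := by
    push_cast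
    rw [Real.coe_toNNReal _ (Finset.sum_nonneg fun i _ => sq_nonneg _),
      Real.coe_toNNReal _ (sq_nonneg σ), hwsum]
    ring
  have hVne : ((∑ i, w i ^ 2).toNNReal * (σ ^ 2).toNNReal : ℝ≥0) ≠ 0 := by
    intro h
    have := hVcoe
    rw [h] at this
    simp only [NNReal.coe_zero] at this
    have hpos : (0:ℝ) < 4 * ‖a - b‖ ^ 2 * σ ^ 2 := by positivity
    linarith
  refine le_trans (gaussianReal_Icc_le _ _ hVne _ _ hε) (ENNReal.ofReal_le_ofReal ?_)
  have hsqrtV : Real.sqrt (2 * π * (((∑ i, w i ^ 2).toNNReal * (σ ^ 2).toNNReal : ℝ≥0) : ℝ))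
      = Real.sqrt (2 * π) * (2 * σ * ‖a - b‖) := by
    rw [hVcoe, show 2 * π * (4 * ‖a - b‖ ^ 2 * σ ^ 2) = (2 * π) * (2 * σ * ‖a - b‖) ^ 2 by ring,
      Real.sqrt_mul (by positivity), Real.sqrt_sq (by positivity)]
  rw [hsqrtV]
  have h2 : (2:ℝ) ≤ Real.sqrt (2 * π) := by
    have h4 : (4:ℝ) ≤ 2 * π := by nlinarith [Real.pi_gt_three]
    nlinarith [Real.sq_sqrt (by linarith : (0:ℝ) ≤ 2 * π), Real.sqrt_nonneg (2 * π)]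
  have hle : 4 * σ * ‖a - b‖ ≤ Real.sqrt (2 * π) * (2 * σ * ‖a - b‖) := by
    have := mul_le_mul_of_nonneg_right h2 (by positivity : (0:ℝ) ≤ 2 * σ * ‖a - b‖)
    linarith
  exact div_le_div_of_nonneg_left hε (by positivity) hle
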